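/- Let n, k, t, s be positive integers such that max(t+1, s) ≤ k ≤ n and 2·max(t,s) ≤ k. Then in every 2-coloring of the edges of K^k_n there is a monochromatic t-tight component C such that E^(s)(C) consists of all s-element subsets of the vertex set; in particular M(n,2,k,t,s) = C(n,s). -/

import Mathlib

open Finset

/-- The `s`-shadow of a hypergraph `H`: all `s`-element vertex sets contained in
some edge of `H`. -/
def hShadow {V : Type*} [DecidableEq V] (s : ℕ) (H : Finset (Finset V)) :
    Finset (Finset V) :=
  H.biUnion fun e => e.powersetCard s

/-- One step of `t`-tight connectivity: both `a` and `b` are edges of `H` and they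
share at least `t` vertices. -/
def TightStep {V : Type*} [DecidableEq V] (t : ℕ) (H : Finset (Finset V))
    (a b : Finset V) : Prop :=
  a ∈ H ∧ b ∈ H ∧ t ≤ (a ∩ b).card

/-- Two edges lie in the same `t`-tight component iff they are joined by a chain of
edges, consecutive ones sharing at least `t` vertices. -/
def TightConn {V : Type*} [DecidableEq V] (t : ℕ) (H : Finset (Finset V)) :
    Finset V → Finset V → Prop :=
  Relation.ReflTransGen (TightStep t H)

open scoped Classical in
/-- The `t`-tight component of the edge `e` in the hypergraph `H`. -/
noncomputable def tightComponent {V : Type*} [DecidableEq V] (t : ℕ)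
    (H : Finset (Finset V)) (e : Finset V) : Finset (Finset V) :=
  H.filter fun f => TightConn t H e f

/-- The `k`-uniform hypergraph `H i` of edges of `K^k_n` having color `i` under the
coloring `c`. -/
def colorClass (n r k : ℕ) (c : Finset (Fin n) → Fin r) (i : Fin r) :
    Finset (Finset (Fin n)) :=
  (Finset.univ.powersetCard k).filter fun e => c e = i

/-- `M(n,r,k,t,s;c)`: the largest number of vertex `s`-sets contained in the edges of
a monochromatic `t`-tight component of the `r`-coloring `c` of `K^k_n`. -/
noncomputable def Mcol (n r k t s : ℕ) (c : Finset (Fin n) → Fin r) : ℕ :=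
  Finset.univ.sup fun i : Fin r =>
    (colorClass n r k c i).sup fun e =>
      (hShadow s (tightComponent t (colorClass n r k c i) e)).card

/-- `M(n,r,k,t,s)`: the minimum of `M(n,r,k,t,s;c)` over all `r`-colorings `c` of
`K^k_n`. -/
noncomputable def Mmin (n r k t s : ℕ) : ℕ :=
  sInf {m | ∃ c : Finset (Fin n) → Fin r, Mcol n r k t s c = m}

/-- **Theorem (two colors, part (a)).** If `max (t+1) s ≤ k ≤ n` and
`2 * max t s ≤ k`, then in every 2-coloring of `K^k_n` there is a monochromatic
`t`-tight component `C` whose `s`-shadow consists of all `s`-subsets of the vertex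
set; in particular `M(n,2,k,t,s) = C(n,s)`. -/


lemma fin2cases (i : Fin 2) : i = 0 ∨ i = 1 := by fin_cases i <;> simp

lemma mem_colorClass_iff {n k : ℕ} {c : Finset (Fin n) → Fin 2} {i : Fin 2}
    {e : Finset (Fin n)} :
    e ∈ colorClass n 2 k c i ↔ e.card = k ∧ c e = i := by
  simp [colorClass, Finset.mem_powersetCard_univ]

/-- the linking relation: both `A` and `B` have at least `t` vertices and are
contained in a common edge of color `i`. -/
def RL (n k t : ℕ) (c : Finset (Fin n) → Fin 2) (i : Fin 2)
    (A B : Finset (Fin n)) : Prop :=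
  t ≤ A.card ∧ t ≤ B.card ∧ ∃ g, g ∈ colorClass n 2 k c i ∧ A ⊆ g ∧ B ⊆ g

lemma RL.symm {n k t : ℕ} {c : Finset (Fin n) → Fin 2} {i : Fin 2}
    {A B : Finset (Fin n)} (h : RL n k t c i A B) : RL n k t c i B A := by
  obtain ⟨h1, h2, g, hg, hA, hB⟩ := h
  exact ⟨h2, h1, g, hg, hB, hA⟩

/-- any two sets of size `≥ t` whose union fits in an edge are linked in one of
the two colors. -/
lemma RL.total {n k t : ℕ} {c : Finset (Fin n) → Fin 2}
    {A B : Finset (Fin n)} (hA : t ≤ A.card) (hB : t ≤ B.card)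
    (hu : (A ∪ B).card ≤ k) (hkn : k ≤ n) :
    RL n k t c 0 A B ∨ RL n k t c 1 A B := by
  obtain ⟨g, hsub, -, hcard⟩ :=
    Finset.exists_subsuperset_card_eq (Finset.subset_univ (A ∪ B)) hu
      (by simpa using hkn)
  have hAg : A ⊆ g := (Finset.subset_union_left).trans hsub
  have hBg : B ⊆ g := (Finset.subset_union_right).trans hsub
  rcases fin2cases (c g) with h | h
  · exact Or.inl ⟨hA, hB, g, mem_colorClass_iff.mpr ⟨hcard, h⟩, hAg, hBg⟩
  · exact Or.inr ⟨hA, hB, g, mem_colorClass_iff.mpr ⟨hcard, h⟩, hAg, hBg⟩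

/-- lifting a chain of links to tight connectivity of edges. -/
lemma chain_lift {n k t : ℕ} {c : Finset (Fin n) → Fin 2} {i : Fin 2}
    {A B : Finset (Fin n)}
    (h : Relation.ReflTransGen (RL n k t c i) A B) (htA : t ≤ A.card)
    {e : Finset (Fin n)} (he : e ∈ colorClass n 2 k c i) (hAe : A ⊆ e) :
    ∀ f ∈ colorClass n 2 k c i, B ⊆ f → TightConn t (colorClass n 2 k c i) e f := by
  induction h with
  | refl =>
    intro f hf hBf
    refine Relation.ReflTransGen.single ⟨he, hf, ?_⟩
    calc t ≤ A.card := htA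
      _ ≤ (e ∩ f).card := Finset.card_le_card (Finset.subset_inter hAe hBf)
  | tail hconn hstep ih =>
    intro f hf hBf
    obtain ⟨hB', hBt, g, hg, hB'g, hBg⟩ := hstep
    have h1 : TightConn t (colorClass n 2 k c i) e g := ih g hg hB'g
    refine h1.tail ⟨hg, hf, ?_⟩
    calc t ≤ _ := hBt
      _ ≤ (g ∩ f).card := Finset.card_le_card (Finset.subset_inter hBg hBf)

/-- In one of the two colors, all `m`-sets are linked-connected. -/
lemma exists_total_color {n k t m : ℕ} {c : Finset (Fin n) → Fin 2}
    (htm : t ≤ m) (h2m : 2 * m ≤ k) (hkn : k ≤ n) :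
    ∃ i : Fin 2, ∀ A B : Finset (Fin n), A.card = m → B.card = m →
      Relation.ReflTransGen (RL n k t c i) A B := by
  have key : ∀ A B : Finset (Fin n), A.card = m → B.card = m →
      RL n k t c 0 A B ∨ RL n k t c 1 A B := by
    intro A B hA hB
    refine RL.total (hA ▸ htm) (hB ▸ htm) ?_ hkn
    calc (A ∪ B).card ≤ A.card + B.card := Finset.card_union_le _ _
      _ ≤ 2 * m := by omega
      _ ≤ k := h2m
  by_cases h0 : ∀ A B : Finset (Fin n), A.card = m → B.card = m →
      Relation.ReflTransGen (RL n k t c 0) A B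
  · exact ⟨0, h0⟩
  push_neg at h0
  obtain ⟨A₀, B₀, hA₀, hB₀, hnc⟩ := h0
  have hmain : ∀ X : Finset (Fin n), X.card = m →
      Relation.ReflTransGen (RL n k t c 1) A₀ X := by
    intro X hX
    by_cases hx : Relation.ReflTransGen (RL n k t c 0) A₀ X
    · have h1 : RL n k t c 1 X B₀ := by
        rcases key X B₀ hX hB₀ with h | h
        · exact absurd (hx.tail h) hnc
        · exact h
      have h2 : RL n k t c 1 A₀ B₀ := by
        rcases key A₀ B₀ hA₀ hB₀ with h | h
        · exact absurd (Relation.ReflTransGen.single h) hnc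
        · exact h
      exact (Relation.ReflTransGen.single h2).tail h1.symm
    · rcases key A₀ X hA₀ hX with h | h
      · exact absurd (Relation.ReflTransGen.single h) hx
      · exact Relation.ReflTransGen.single h
  refine ⟨1, fun A B hA hB => ?_⟩
  have hsymm : Symmetric (Relation.ReflTransGen (RL n k t c 1)) :=
    (@Relation.ReflTransGen.symmetric _ _ ⟨fun _ _ h => h.symm⟩).symm
  exact (hsymm (hmain A hA)).trans (hmain B hB)

lemma main_lemma (n k t s : ℕ) (ht : 0 < t) (hs : 0 < s)
    (hmax : max (t + 1) s ≤ k) (hkn : k ≤ n) (h2 : 2 * max t s ≤ k)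
    (c : Finset (Fin n) → Fin 2) :
    ∃ i : Fin 2, ∃ e ∈ colorClass n 2 k c i,
      hShadow s (tightComponent t (colorClass n 2 k c i) e) =
        Finset.univ.powersetCard s := by
  set m := max t s with hm
  have htm : t ≤ m := le_max_left _ _
  have hsm : s ≤ m := le_max_right _ _
  have hmn : m ≤ n := by omega
  obtain ⟨i, htotal⟩ := exists_total_color (c := c) htm h2 hkn
  -- find an m-set A₁ and an edge of color i containing it
  obtain ⟨A₁, -, -, hA₁⟩ := Finset.exists_subsuperset_card_eq
    (Finset.empty_subset (Finset.univ : Finset (Fin n)))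
    (by simp) (by simpa using hmn : m ≤ (Finset.univ : Finset (Fin n)).card)
  -- a second m-set, distinct from A₁
  have hmpos : 0 < m := lt_of_lt_of_le ht htm
  have hmltn : m < n := by omega
  obtain ⟨z, hz⟩ : ∃ z, z ∉ A₁ := by
    by_contra h
    push_neg at h
    have : (Finset.univ : Finset (Fin n)) ⊆ A₁ := fun x _ => h x
    have := Finset.card_le_card this
    simp [hA₁] at this
    omega
  obtain ⟨w, hw⟩ : A₁.Nonempty := Finset.card_pos.mp (by omega)
  set A₂ := insert z (A₁.erase w) with hA₂def
  have hzA₂ : z ∉ A₁.erase w := fun h => hz (Finset.mem_of_mem_erase h)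
  have hA₂ : A₂.card = m := by
    rw [hA₂def, Finset.card_insert_of_notMem hzA₂, Finset.card_erase_of_mem hw, hA₁]
    omega
  have hne : A₁ ≠ A₂ := by
    intro h
    exact hz (h ▸ Finset.mem_insert_self z _)
  obtain ⟨e₁, he₁, hA₁e₁⟩ : ∃ e₁, e₁ ∈ colorClass n 2 k c i ∧ A₁ ⊆ e₁ := by
    rcases (htotal A₁ A₂ hA₁ hA₂).cases_head with h | ⟨B, hstep, -⟩
    · exact absurd h hne
    · obtain ⟨-, -, g, hg, hAg, -⟩ := hstep
      exact ⟨g, hg, hAg⟩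
  refine ⟨i, e₁, he₁, ?_⟩
  ext T
  simp only [hShadow, Finset.mem_biUnion, Finset.mem_powersetCard]
  constructor
  · rintro ⟨f, -, -, hcard⟩
    exact ⟨Finset.subset_univ T, hcard⟩
  · rintro ⟨-, hT⟩
    obtain ⟨A, hTA, -, hAm⟩ := Finset.exists_subsuperset_card_eq
      (Finset.subset_univ T) (show T.card ≤ m by omega) (by simpa using hmn)
    have hconn := htotal A₁ A hA₁ hAm
    obtain ⟨f, hf, hAf⟩ : ∃ f, f ∈ colorClass n 2 k c i ∧ A ⊆ f := by
      rcases hconn.cases_tail with h | ⟨B, -, hstep⟩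
      · exact ⟨e₁, he₁, h ▸ hA₁e₁⟩
      · obtain ⟨-, -, g, hg, -, hAg⟩ := hstep
        exact ⟨g, hg, hAg⟩
    have htight : TightConn t (colorClass n 2 k c i) e₁ f :=
      chain_lift hconn (hA₁ ▸ htm) he₁ hA₁e₁ f hf hAf
    refine ⟨f, ?_, hTA.trans hAf, hT⟩
    simp only [tightComponent, Finset.mem_filter]
    exact ⟨hf, htight⟩

theorem statement3 (n k t s : ℕ) (hk : 0 < k) (ht : 0 < t) (hs : 0 < s)
    (hn : 0 < n) (hmax : max (t + 1) s ≤ k) (hkn : k ≤ n)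
    (h2 : 2 * max t s ≤ k) :
    (∀ c : Finset (Fin n) → Fin 2, ∃ i : Fin 2, ∃ e ∈ colorClass n 2 k c i,
      hShadow s (tightComponent t (colorClass n 2 k c i) e) =
        Finset.univ.powersetCard s) ∧
    Mmin n 2 k t s = n.choose s := by
  have hmain := main_lemma n k t s ht hs hmax hkn h2
  refine ⟨hmain, ?_⟩
  have hcard : ((Finset.univ : Finset (Fin n)).powersetCard s).card = n.choose s := by
    rw [Finset.card_powersetCard]
    simp
  have hMcol : ∀ c : Finset (Fin n) → Fin 2, Mcol n 2 k t s c = n.choose s := by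
    intro c
    apply le_antisymm
    · apply Finset.sup_le
      intro i _
      apply Finset.sup_le
      intro e _
      rw [← hcard]
      apply Finset.card_le_card
      intro T hT
      simp only [hShadow, Finset.mem_biUnion, Finset.mem_powersetCard] at hT
      obtain ⟨f, -, hTf, hcardT⟩ := hT
      simp [Finset.mem_powersetCard_univ, hcardT]
    · obtain ⟨i, e, he, hsh⟩ := hmain c
      calc n.choose s = (hShadow s (tightComponent t (colorClass n 2 k c i) e)).card := by
            rw [hsh, hcard]
        _ ≤ (colorClass n 2 k c i).sup (fun e =>
              (hShadow s (tightComponent t (colorClass n 2 k c i) e)).card) :=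
            Finset.le_sup (f := fun e =>
              (hShadow s (tightComponent t (colorClass n 2 k c i) e)).card) he
        _ ≤ Mcol n 2 k t s c := by
            rw [Mcol]
            exact Finset.le_sup (f := fun i : Fin 2 =>
              (colorClass n 2 k c i).sup fun e =>
                (hShadow s (tightComponent t (colorClass n 2 k c i) e)).card)
              (Finset.mem_univ i)
  have hset : {m | ∃ c : Finset (Fin n) → Fin 2, Mcol n 2 k t s c = m}
      = {n.choose s} := by
    ext x
    constructor
    · rintro ⟨c, rfl⟩
      exact hMcol c
    · rintro rfl
      exact ⟨fun _ => 0, hMcol _⟩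
  rw [Mmin, hset, csInf_singleton]
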